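/- Let T > 0, let a > b ≥ 0 be real numbers, and let γ ≥ 1 satisfy γ > (a−1)/(a−b). Then there exists a constant C > 0, depending only on T, γ, a, b, such that for every integer n ≥ 2, the Kusuoka partition (t_j) of [0,T] with parameter γ and n+1 points satisfies ∑_{j=0}^{n−2} (t_{j+1} − t_j)^a (T − t_{j+1})^{−b} ≤ C n^{−(a−1)}. -/

import Mathlib

private lemma kus_mvt_upper {x y p : ℝ} (hy : 0 ≤ y) (hxy : y ≤ x) (hp : 1 ≤ p) :
    x ^ p - y ^ p ≤ p * x ^ (p - 1) * (x - y) := by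
  rcases eq_or_lt_of_le (hy.trans hxy) with h | hx
  · obtain rfl : x = 0 := h.symm
    obtain rfl : y = 0 := le_antisymm hxy hy
    simp [Real.zero_rpow (one_pos.trans_le hp).ne']
  · have hs : -1 ≤ y / x - 1 := by
      have h0 : 0 ≤ y / x := div_nonneg hy hx.le
      linarith
    have hB := one_add_mul_self_le_rpow_one_add hs hp
    have hbase : 1 + (y / x - 1) = y / x := by ring
    rw [hbase] at hB
    have hxp : (0:ℝ) < x ^ p := Real.rpow_pos_of_pos hx p
    have h2 := mul_le_mul_of_nonneg_right hB hxp.le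
    rw [Real.div_rpow hy hx.le, div_mul_cancel₀ _ hxp.ne'] at h2
    have key : x ^ p = x ^ (p - 1) * x := by
      rw [← Real.rpow_add_one hx.ne' (p - 1), sub_add_cancel]
    have hyx : y / x * x = y := div_mul_cancel₀ y hx.ne'
    have e1 : (1 + p * (y / x - 1)) * x ^ p
        = x ^ (p-1) * x + p * (y / x * x) * x ^ (p-1) - p * (x ^ (p-1) * x) := by
      rw [key]; ring
    rw [hyx] at e1
    rw [key]
    linarith [h2, e1]

private lemma kus_mvt_mid {x y p : ℝ} (hy : 0 ≤ y) (hxy : y ≤ x) (hp : 1 ≤ p) :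
    x ^ (p - 1) * (x - y) ≤ x ^ p - y ^ p := by
  rcases eq_or_lt_of_le (hy.trans hxy) with h | hx
  · obtain rfl : x = 0 := h.symm
    obtain rfl : y = 0 := le_antisymm hxy hy
    simp [Real.zero_rpow (one_pos.trans_le hp).ne']
  · have key : x ^ p = x ^ (p - 1) * x := by
      rw [← Real.rpow_add_one hx.ne' (p - 1), sub_add_cancel]
    have h1 : y ^ p ≤ y * x ^ (p - 1) := by
      rcases eq_or_lt_of_le hy with h0 | hy0
      · rw [← h0, Real.zero_rpow (one_pos.trans_le hp).ne', zero_mul]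
      · have keyy : y ^ p = y ^ (p - 1) * y := by
          rw [← Real.rpow_add_one hy0.ne' (p - 1), sub_add_cancel]
        have hm : y ^ (p-1) ≤ x ^ (p-1) := Real.rpow_le_rpow hy hxy (by linarith)
        rw [keyy]
        nlinarith [hm, hy0.le]
    rw [key]
    linarith [h1]

private lemma kus_mvt_lower {x y p : ℝ} (hy : 0 ≤ y) (hxy : y ≤ x) (hp0 : 0 < p) (hp1 : p ≤ 1) :
    p * x ^ (p - 1) * (x - y) ≤ x ^ p - y ^ p := by
  rcases eq_or_lt_of_le (hy.trans hxy) with h | hx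
  · obtain rfl : x = 0 := h.symm
    obtain rfl : y = 0 := le_antisymm hxy hy
    simp [Real.zero_rpow hp0.ne']
  · have hs : -1 ≤ y / x - 1 := by
      have h0 : 0 ≤ y / x := div_nonneg hy hx.le
      linarith
    have hB := rpow_one_add_le_one_add_mul_self hs hp0.le hp1
    have hbase : 1 + (y / x - 1) = y / x := by ring
    rw [hbase] at hB
    have hxp : (0:ℝ) < x ^ p := Real.rpow_pos_of_pos hx p
    have h2 := mul_le_mul_of_nonneg_right hB hxp.le
    rw [Real.div_rpow hy hx.le, div_mul_cancel₀ _ hxp.ne'] at h2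
    have key : x ^ p = x ^ (p - 1) * x := by
      rw [← Real.rpow_add_one hx.ne' (p - 1), sub_add_cancel]
    have hyx : y / x * x = y := div_mul_cancel₀ y hx.ne'
    have e1 : (1 + p * (y / x - 1)) * x ^ p
        = x ^ (p-1) * x + p * (y / x * x) * x ^ (p-1) - p * (x ^ (p-1) * x) := by
      rw [key]; ring
    rw [hyx] at e1
    rw [key]
    linarith [h2, e1]

private lemma kus_term (T a b γ : ℝ) (hT : 0 < T) (hb : 0 ≤ b) (hab : b < a) (hγ1 : 1 ≤ γ)
    {x y : ℝ} (hy : 0 < y) (hxy : y ≤ x) (h2y : x ≤ 2 * y) :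
    (T * (x ^ γ - y ^ γ)) ^ a * (T * y ^ γ) ^ (-b)
      ≤ (T ^ (a - b) * γ ^ a * (2:ℝ) ^ ((γ - 1) * a))
          * ((x - y) ^ a * y ^ (γ * (a - b) - a)) := by
  have ha : 0 < a := hb.trans_lt hab
  have hγ0 : (0:ℝ) < γ := one_pos.trans_le hγ1
  have hx : 0 < x := hy.trans_le hxy
  have hγγ : (0:ℝ) ≤ γ - 1 := by linarith
  have hdiff0 : 0 ≤ x ^ γ - y ^ γ :=
    sub_nonneg.2 (Real.rpow_le_rpow hy.le hxy hγ0.le)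
  have hxyn : 0 ≤ x - y := sub_nonneg.2 hxy
  -- MVT bound
  have step1 : x ^ γ - y ^ γ ≤ γ * x ^ (γ - 1) * (x - y) := kus_mvt_upper hy.le hxy hγ1
  -- x^(γ-1) ≤ 2^(γ-1) * y^(γ-1)
  have step2 : x ^ (γ - 1) ≤ (2:ℝ) ^ (γ - 1) * y ^ (γ - 1) := by
    have h1 : x ^ (γ - 1) ≤ (2 * y) ^ (γ - 1) := Real.rpow_le_rpow hx.le h2y hγγ
    rwa [Real.mul_rpow (by norm_num) hy.le] at h1
  have step3 : T * (x ^ γ - y ^ γ) ≤ T * (γ * ((2:ℝ) ^ (γ - 1) * y ^ (γ - 1)) * (x - y)) := by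
    have h2 : γ * x ^ (γ - 1) * (x - y) ≤ γ * ((2:ℝ) ^ (γ - 1) * y ^ (γ - 1)) * (x - y) := by
      apply mul_le_mul_of_nonneg_right _ hxyn
      exact mul_le_mul_of_nonneg_left step2 hγ0.le
    exact mul_le_mul_of_nonneg_left (step1.trans h2) hT.le
  have hfac1 : (T * (x ^ γ - y ^ γ)) ^ a
      ≤ (T * (γ * ((2:ℝ) ^ (γ - 1) * y ^ (γ - 1)) * (x - y))) ^ a :=
    Real.rpow_le_rpow (by positivity) step3 ha.le
  have e2 : (T * (γ * ((2:ℝ) ^ (γ - 1) * y ^ (γ - 1)) * (x - y))) ^ a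
      = T ^ a * (γ ^ a * ((2:ℝ) ^ ((γ - 1) * a) * y ^ ((γ - 1) * a)) * (x - y) ^ a) := by
    rw [Real.mul_rpow hT.le (by positivity),
        Real.mul_rpow (by positivity) hxyn,
        Real.mul_rpow hγ0.le (by positivity),
        Real.mul_rpow (by positivity : (0:ℝ) ≤ (2:ℝ) ^ (γ - 1)) (by positivity),
        ← Real.rpow_mul (by norm_num : (0:ℝ) ≤ 2),
        ← Real.rpow_mul hy.le]
  have e3 : (T * y ^ γ) ^ (-b) = T ^ (-b) * y ^ (γ * (-b)) := by
    rw [Real.mul_rpow hT.le (by positivity), ← Real.rpow_mul hy.le]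
  have hfac2 : (0:ℝ) ≤ (T * y ^ γ) ^ (-b) := Real.rpow_nonneg (by positivity) _
  calc (T * (x ^ γ - y ^ γ)) ^ a * (T * y ^ γ) ^ (-b)
      ≤ (T * (γ * ((2:ℝ) ^ (γ - 1) * y ^ (γ - 1)) * (x - y))) ^ a * (T * y ^ γ) ^ (-b) :=
        mul_le_mul_of_nonneg_right hfac1 hfac2
    _ = T ^ a * (γ ^ a * ((2:ℝ) ^ ((γ - 1) * a) * y ^ ((γ - 1) * a)) * (x - y) ^ a)
          * (T ^ (-b) * y ^ (γ * (-b))) := by rw [e2, e3]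
    _ = (T ^ (a - b) * γ ^ a * (2:ℝ) ^ ((γ - 1) * a)) * ((x - y) ^ a * y ^ (γ * (a - b) - a)) := by
        rw [show γ * (a - b) - a = (γ - 1) * a + γ * (-b) by ring, Real.rpow_add hy,
          show a - b = a + (-b) by ring, Real.rpow_add hT]
        ring

private lemma kus_sum (σ : ℝ) (hσ : -1 < σ) (n : ℕ) (hn : 2 ≤ n) :
    ∑ j ∈ Finset.range (n - 1), (1 - ((j:ℝ) + 1) / (n:ℝ)) ^ σ
      ≤ max 1 (1 / (1 + σ)) * (n:ℝ) := by
  have hσ1 : (0:ℝ) < 1 + σ := by linarith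
  have hN0 : (0:ℝ) < (n:ℝ) := Nat.cast_pos.2 (by omega)
  set M : ℝ := max 1 (1 / (1 + σ)) with hMdef
  have hM1 : (1:ℝ) ≤ M := le_max_left _ _
  have hM2 : 1 / (1 + σ) ≤ M := le_max_right _ _
  -- reindex: reflect the sum
  have hre : ∑ j ∈ Finset.range (n - 1), (1 - ((j:ℝ) + 1) / (n:ℝ)) ^ σ
      = ∑ j ∈ Finset.range (n - 1), (((j:ℝ) + 1) / (n:ℝ)) ^ σ := by
    rw [← Finset.sum_range_reflect (fun k => (((k:ℝ) + 1) / (n:ℝ)) ^ σ) (n - 1)]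
    apply Finset.sum_congr rfl
    intro j hj
    rw [Finset.mem_range] at hj
    congr 1
    have h1 : ((n - 1 - 1 - j : ℕ) : ℝ) = (n:ℝ) - 2 - j := by
      have h2 : n - 1 - 1 - j = n - (2 + j) := by omega
      rw [h2, Nat.cast_sub (by omega)]
      push_cast
      ring
    rw [h1]
    field_simp
    ring
  rw [hre]
  -- per-term comparison with telescoping differences
  have per : ∀ j : ℕ, ((j:ℝ) + 1) ^ σ
      ≤ M * (((j:ℝ) + 1) ^ (1 + σ) - ((j:ℝ)) ^ (1 + σ)) := by
    intro j
    have hj0 : (0:ℝ) ≤ (j:ℝ) := Nat.cast_nonneg j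
    have hjx : (j:ℝ) ≤ (j:ℝ) + 1 := by linarith
    have hmono : (0:ℝ) ≤ ((j:ℝ) + 1) ^ (1 + σ) - ((j:ℝ)) ^ (1 + σ) :=
      sub_nonneg.2 (Real.rpow_le_rpow hj0 hjx hσ1.le)
    have he : (1:ℝ) + σ - 1 = σ := by ring
    have he2 : ((j:ℝ) + 1) - (j:ℝ) = 1 := by ring
    rcases le_or_gt 0 σ with h0 | h0
    · have hB := kus_mvt_mid hj0 hjx (by linarith : (1:ℝ) ≤ 1 + σ)
      rw [he, he2, mul_one] at hB
      calc ((j:ℝ) + 1) ^ σ ≤ 1 * (((j:ℝ) + 1) ^ (1 + σ) - ((j:ℝ)) ^ (1 + σ)) := by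
            rw [one_mul]; exact hB
        _ ≤ M * (((j:ℝ) + 1) ^ (1 + σ) - ((j:ℝ)) ^ (1 + σ)) :=
            mul_le_mul_of_nonneg_right hM1 hmono
    · have hB := kus_mvt_lower hj0 hjx hσ1 (by linarith : (1:ℝ) + σ ≤ 1)
      rw [he, he2, mul_one] at hB
      have heq : ((j:ℝ) + 1) ^ σ = (1 / (1 + σ)) * ((1 + σ) * ((j:ℝ) + 1) ^ σ) := by
        field_simp
      calc ((j:ℝ) + 1) ^ σ = (1 / (1 + σ)) * ((1 + σ) * ((j:ℝ) + 1) ^ σ) := heq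
        _ ≤ (1 / (1 + σ)) * (((j:ℝ) + 1) ^ (1 + σ) - ((j:ℝ)) ^ (1 + σ)) :=
            mul_le_mul_of_nonneg_left hB (by positivity)
        _ ≤ M * (((j:ℝ) + 1) ^ (1 + σ) - ((j:ℝ)) ^ (1 + σ)) :=
            mul_le_mul_of_nonneg_right hM2 hmono
  -- telescoping
  have tele : ∑ j ∈ Finset.range (n - 1), (((j:ℝ) + 1) ^ (1 + σ) - ((j:ℝ)) ^ (1 + σ))
      = ((n - 1 : ℕ) : ℝ) ^ (1 + σ) := by
    have h := Finset.sum_range_sub (fun k : ℕ => ((k:ℝ)) ^ (1 + σ)) (n - 1)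
    simp only [Nat.cast_add, Nat.cast_one, Nat.cast_zero] at h
    rw [Real.zero_rpow hσ1.ne', sub_zero] at h
    exact h
  have hsum1 : ∑ j ∈ Finset.range (n - 1), ((j:ℝ) + 1) ^ σ
      ≤ M * ((n:ℝ)) ^ (1 + σ) := by
    calc ∑ j ∈ Finset.range (n - 1), ((j:ℝ) + 1) ^ σ
        ≤ ∑ j ∈ Finset.range (n - 1),
            M * (((j:ℝ) + 1) ^ (1 + σ) - ((j:ℝ)) ^ (1 + σ)) :=
          Finset.sum_le_sum fun j _ => per j
      _ = M * ((n - 1 : ℕ) : ℝ) ^ (1 + σ) := by rw [← Finset.mul_sum, tele]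
      _ ≤ M * ((n:ℝ)) ^ (1 + σ) := by
          apply mul_le_mul_of_nonneg_left _ (le_trans zero_le_one hM1)
          apply Real.rpow_le_rpow (Nat.cast_nonneg _) _ hσ1.le
          exact_mod_cast Nat.sub_le n 1
  -- divide by n^σ
  have hNσ : (0:ℝ) < (n:ℝ) ^ σ := Real.rpow_pos_of_pos hN0 σ
  have hdiv : ∑ j ∈ Finset.range (n - 1), (((j:ℝ) + 1) / (n:ℝ)) ^ σ
      = (∑ j ∈ Finset.range (n - 1), ((j:ℝ) + 1) ^ σ) / (n:ℝ) ^ σ := by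
    rw [Finset.sum_div]
    exact Finset.sum_congr rfl fun j _ => Real.div_rpow (by positivity) hN0.le σ
  rw [hdiv]
  have hfin : (n:ℝ) ^ (1 + σ) / (n:ℝ) ^ σ = (n:ℝ) := by
    rw [Real.rpow_add hN0, Real.rpow_one, mul_div_assoc, div_self hNσ.ne', mul_one]
  calc (∑ j ∈ Finset.range (n - 1), ((j:ℝ) + 1) ^ σ) / (n:ℝ) ^ σ
      ≤ (M * ((n:ℝ)) ^ (1 + σ)) / (n:ℝ) ^ σ := by gcongr
    _ = M * (n:ℝ) := by rw [mul_div_assoc, hfin]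

/-- For `T > 0`, reals `a > b ≥ 0` and `γ ≥ 1` with `γ > (a-1)/(a-b)`, there is a
constant `C > 0` (depending only on `T, γ, a, b`) such that for every `n ≥ 2`, the Kusuoka
partition `t j = T * (1 - (1 - j/n)^γ)` (for `j ≤ n-1`), `t n = T`, satisfies
`∑_{j=0}^{n-2} (t (j+1) - t j)^a * (T - t (j+1))^(-b) ≤ C * n^(-(a-1))`. -/
theorem stmt_1 (T a b γ : ℝ) (hT : 0 < T) (hb : 0 ≤ b) (hab : b < a)
    (hγ1 : 1 ≤ γ) (hγ : (a - 1) / (a - b) < γ) :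
    ∃ C > 0, ∀ n : ℕ, 2 ≤ n → ∀ t : ℕ → ℝ,
      (∀ j, j ≤ n - 1 → t j = T * (1 - (1 - (j : ℝ) / n) ^ γ)) →
      t n = T →
      ∑ j ∈ Finset.range (n - 1), (t (j + 1) - t j) ^ a * (T - t (j + 1)) ^ (-b)
        ≤ C * (n : ℝ) ^ (-(a - 1)) := by
  have hab' : 0 < a - b := sub_pos.2 hab
  have ha : 0 < a := hb.trans_lt hab
  have hγ0 : (0:ℝ) < γ := one_pos.trans_le hγ1
  have hσ : -1 < γ * (a - b) - a := by
    have h := (div_lt_iff₀ hab').1 hγ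
    linarith
  have hσ1 : (0:ℝ) < 1 + (γ * (a - b) - a) := by linarith
  set K : ℝ := T ^ (a - b) * γ ^ a * (2:ℝ) ^ ((γ - 1) * a) with hKdef
  set M : ℝ := max 1 (1 / (1 + (γ * (a - b) - a))) with hMdef
  have hK0 : 0 < K := by positivity
  have hM0 : (0:ℝ) < M := lt_of_lt_of_le one_pos (le_max_left _ _)
  refine ⟨K * M, mul_pos hK0 hM0, ?_⟩
  intro n hn t ht htn
  have hN0 : (0:ℝ) < (n:ℝ) := Nat.cast_pos.2 (by omega)
  -- per-term bound
  have hterm : ∀ j ∈ Finset.range (n - 1),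
      (t (j + 1) - t j) ^ a * (T - t (j + 1)) ^ (-b)
        ≤ K * ((1 / (n:ℝ)) ^ a * (1 - ((j:ℝ) + 1) / (n:ℝ)) ^ (γ * (a - b) - a)) := by
    intro j hj
    rw [Finset.mem_range] at hj
    have hj1 : j ≤ n - 1 := by omega
    have hj2 : j + 1 ≤ n - 1 := by omega
    have hjr : (j:ℝ) + 2 ≤ (n:ℝ) := by exact_mod_cast (show j + 2 ≤ n by omega)
    have hy : 0 < 1 - ((j:ℝ) + 1) / (n:ℝ) := by
      rw [sub_pos, div_lt_one hN0]; linarith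
    have hxy : 1 - ((j:ℝ) + 1) / (n:ℝ) ≤ 1 - (j:ℝ) / (n:ℝ) := by
      have h1 : (j:ℝ) / (n:ℝ) ≤ ((j:ℝ) + 1) / (n:ℝ) := by gcongr; linarith
      linarith
    have h2y : 1 - (j:ℝ) / (n:ℝ) ≤ 2 * (1 - ((j:ℝ) + 1) / (n:ℝ)) := by
      have e : 2 * (1 - ((j:ℝ) + 1) / (n:ℝ)) - (1 - (j:ℝ) / (n:ℝ))
          = 1 - ((j:ℝ) + 2) / (n:ℝ) := by
        field_simp
        ring
      have h1 : ((j:ℝ) + 2) / (n:ℝ) ≤ 1 := (div_le_one hN0).2 hjr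
      linarith
    have e0 : t j = T * (1 - (1 - (j:ℝ) / (n:ℝ)) ^ γ) := ht j hj1
    have e1 : t (j + 1) = T * (1 - (1 - ((j:ℝ) + 1) / (n:ℝ)) ^ γ) := by
      have h := ht (j + 1) hj2
      push_cast at h
      exact h
    have ed : t (j + 1) - t j
        = T * ((1 - (j:ℝ) / (n:ℝ)) ^ γ - (1 - ((j:ℝ) + 1) / (n:ℝ)) ^ γ) := by
      rw [e0, e1]; ring
    have eT : T - t (j + 1) = T * (1 - ((j:ℝ) + 1) / (n:ℝ)) ^ γ := by
      rw [e1]; ring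
    rw [ed, eT]
    have hbb := kus_term T a b γ hT hb hab hγ1 hy hxy h2y
    have hdxy : (1 - (j:ℝ) / (n:ℝ)) - (1 - ((j:ℝ) + 1) / (n:ℝ)) = 1 / (n:ℝ) := by
      field_simp
      ring
    rw [hdxy] at hbb
    exact hbb
  -- assemble
  have hNa : (0:ℝ) ≤ (1 / (n:ℝ)) ^ a := Real.rpow_nonneg (by positivity) a
  calc ∑ j ∈ Finset.range (n - 1), (t (j + 1) - t j) ^ a * (T - t (j + 1)) ^ (-b)
      ≤ ∑ j ∈ Finset.range (n - 1),
          K * ((1 / (n:ℝ)) ^ a * (1 - ((j:ℝ) + 1) / (n:ℝ)) ^ (γ * (a - b) - a)) :=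
        Finset.sum_le_sum hterm
    _ = K * (1 / (n:ℝ)) ^ a
          * ∑ j ∈ Finset.range (n - 1), (1 - ((j:ℝ) + 1) / (n:ℝ)) ^ (γ * (a - b) - a) := by
        rw [Finset.mul_sum]
        exact Finset.sum_congr rfl fun j _ => by ring
    _ ≤ K * (1 / (n:ℝ)) ^ a * (M * (n:ℝ)) := by
        apply mul_le_mul_of_nonneg_left (kus_sum _ hσ n hn)
        exact mul_nonneg hK0.le hNa
    _ = K * M * ((n:ℝ)) ^ (-(a - 1)) := by
        have e1 : (1 / (n:ℝ)) ^ a = ((n:ℝ)) ^ (-a) := by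
          rw [one_div, ← Real.rpow_neg_one, ← Real.rpow_mul hN0.le, neg_one_mul]
        have e2 : ((n:ℝ)) ^ (-a) * (n:ℝ) = ((n:ℝ)) ^ (-(a - 1)) := by
          rw [show -(a - 1) = -a + 1 by ring, Real.rpow_add hN0, Real.rpow_one]
        rw [e1]
        rw [← e2]
        ring
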